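/- Let f : ℝⁿ → ℝ ∪ {+∞} be bounded below by f* and have the descent property on ℝⁿ with constant L > 0. Let (x_k) and (w_k) satisfy x_{k+1} = x_k + α_k w_k with ‖w_k‖ ≤ 1, d_k := df(x_k)(w_k) < 0, and each α_k produced by Armijo backtracking with reduction multiple μ ∈ (0, 1): either α_k = 1 passes the test, or α_k passes while α_k/μ fails. Set M := min{1/2, μ/(2L)}. Then for every N with min_{0 ≤ k ≤ N} min{|d_k|, d_k²} < 1, the bound min_{0 ≤ k ≤ N} |d_k| ≤ √((f(x_0) − f*)/(M(N + 1))) holds. -/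

import Mathlib

open Filter Topology Set

/-- The subderivative `df(x̄)(w) := liminf_{t↓0, w'→w} (f(x̄ + t w') − f(x̄))/t`
of an extended-real-valued function. -/
noncomputable def subderiv {n : ℕ} (f : EuclideanSpace ℝ (Fin n) → EReal)
    (x w : EuclideanSpace ℝ (Fin n)) : EReal :=
  Filter.liminf
    (fun p : ℝ × EuclideanSpace ℝ (Fin n) =>
      (((p.1)⁻¹ : ℝ) : EReal) * (f (x + p.1 • p.2) - f x))
    ((𝓝[>] (0:ℝ)) ×ˢ 𝓝 w)

/-- `F` is semi-differentiable at `x` for the direction `w` with semi-derivative `d`: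
`d = lim_{t↓0, w'→w} (F(x + t w') − F(x))/t`. -/
def HasSemiderivAt {E V : Type*} [NormedAddCommGroup E] [NormedSpace ℝ E]
    [NormedAddCommGroup V] [NormedSpace ℝ V]
    (F : E → V) (x w : E) (d : V) : Prop :=
  Filter.Tendsto (fun p : ℝ × E => (p.1)⁻¹ • (F (x + p.1 • p.2) - F x))
    ((𝓝[>] (0:ℝ)) ×ˢ 𝓝 w) (𝓝 d)

/-- `f` has the descent property on `Ω` with constant `L`:
`f(y) ≤ f(x) + df(x)(y − x) + (L/2)‖y − x‖²` for all `x, y ∈ Ω`. -/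
def DescentPropOn {n : ℕ} (f : EuclideanSpace ℝ (Fin n) → EReal)
    (Ω : Set (EuclideanSpace ℝ (Fin n))) (L : ℝ) : Prop :=
  ∀ x ∈ Ω, ∀ y ∈ Ω,
    f y ≤ f x + subderiv f x (y - x) + (((L / 2) * ‖y - x‖ ^ 2 : ℝ) : EReal)

/-! ### Auxiliary lemmas -/

lemma SDaux.ereal_cmul_cancel {c : ℝ} (hc : 0 < c) (y : EReal) :
    ((c⁻¹ : ℝ) : EReal) * ((c : EReal) * y) = y := by
  rw [← mul_assoc, ← EReal.coe_mul, inv_mul_cancel₀ hc.ne', EReal.coe_one, one_mul]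

/-- Multiplication by a positive real constant as an order isomorphism of `EReal`. -/
noncomputable def SDaux.mulIso (c : ℝ) (hc : 0 < c) : EReal ≃o EReal where
  toFun y := (c : EReal) * y
  invFun y := ((c⁻¹ : ℝ) : EReal) * y
  left_inv y := SDaux.ereal_cmul_cancel hc y
  right_inv y := by simpa using SDaux.ereal_cmul_cancel (inv_pos.mpr hc) y
  map_rel_iff' := by
    intro a b
    show (c : EReal) * a ≤ (c : EReal) * b ↔ a ≤ b
    constructor
    · intro h
      have := mul_le_mul_of_nonneg_left h (EReal.coe_nonneg.2 (inv_pos.mpr hc).le)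
      rwa [SDaux.ereal_cmul_cancel hc, SDaux.ereal_cmul_cancel hc] at this
    · intro h
      exact mul_le_mul_of_nonneg_left h (EReal.coe_nonneg.2 hc.le)

lemma SDaux.liminf_coe_mul {α : Type*} {l : Filter α} {c : ℝ} (hc : 0 < c) (u : α → EReal) :
    Filter.liminf (fun x => (c : EReal) * u x) l = (c : EReal) * Filter.liminf u l :=
  ((SDaux.mulIso c hc).liminf_apply).symm

lemma SDaux.tendsto_mul_nhdsGT_zero {s : ℝ} (hs : 0 < s) :
    Tendsto (fun t : ℝ => s * t) (𝓝[>] (0:ℝ)) (𝓝[>] (0:ℝ)) := by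
  apply tendsto_nhdsWithin_of_tendsto_nhds_of_eventually_within
  · have : Tendsto (fun t : ℝ => s * t) (𝓝 (0:ℝ)) (𝓝 (s * 0)) :=
      (continuous_const.mul continuous_id).tendsto 0
    rw [mul_zero] at this
    exact this.mono_left nhdsWithin_le_nhds
  · filter_upwards [self_mem_nhdsWithin] with t ht
    exact mul_pos hs ht

lemma SDaux.map_smul_nhds {E : Type*} [NormedAddCommGroup E] [NormedSpace ℝ E]
    {s : ℝ} (hs : s ≠ 0) (w : E) :
    Tendsto (fun v : E => s⁻¹ • v) (𝓝 (s • w)) (𝓝 w) := by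
  have : Tendsto (fun v : E => s⁻¹ • v) (𝓝 (s • w)) (𝓝 (s⁻¹ • (s • w))) :=
    (continuous_const_smul (s⁻¹ : ℝ)).tendsto (s • w)
  rwa [smul_smul, inv_mul_cancel₀ hs, one_smul] at this

lemma SDaux.map_psi_eq {E : Type*} [NormedAddCommGroup E] [NormedSpace ℝ E]
    {s : ℝ} (hs : 0 < s) (w : E) :
    Filter.map (fun p : ℝ × E => (s * p.1, s⁻¹ • p.2))
      ((𝓝[>] (0:ℝ)) ×ˢ 𝓝 (s • w)) = (𝓝[>] (0:ℝ)) ×ˢ 𝓝 w := by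
  apply le_antisymm
  · exact ((SDaux.tendsto_mul_nhdsGT_zero hs).prodMap (SDaux.map_smul_nhds hs.ne' w))
  · have h2 : Tendsto (fun p : ℝ × E => (s⁻¹ * p.1, s • p.2))
        ((𝓝[>] (0:ℝ)) ×ˢ 𝓝 w) ((𝓝[>] (0:ℝ)) ×ˢ 𝓝 (s • w)) :=
      (SDaux.tendsto_mul_nhdsGT_zero (inv_pos.mpr hs)).prodMap
        ((continuous_const_smul (s : ℝ)).tendsto w)
    have heq : (𝓝[>] (0:ℝ)) ×ˢ 𝓝 w =
        Filter.map (fun p : ℝ × E => (s * p.1, s⁻¹ • p.2))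
          (Filter.map (fun p : ℝ × E => (s⁻¹ * p.1, s • p.2)) ((𝓝[>] (0:ℝ)) ×ˢ 𝓝 w)) := by
      rw [Filter.map_map]
      have : ((fun p : ℝ × E => (s * p.1, s⁻¹ • p.2)) ∘
          (fun p : ℝ × E => (s⁻¹ * p.1, s • p.2))) = id := by
        funext p
        simp [Function.comp, ← mul_assoc, mul_inv_cancel₀ hs.ne', smul_smul,
          inv_mul_cancel₀ hs.ne']
      rw [this, Filter.map_id]
    rw [heq]
    exact Filter.map_mono h2

/-- Positive homogeneity of the subderivative. -/
lemma SDaux.subderiv_smul {n : ℕ} (f : EuclideanSpace ℝ (Fin n) → EReal)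
    (x w : EuclideanSpace ℝ (Fin n)) {s : ℝ} (hs : 0 < s) :
    subderiv f x (s • w) = (s : EReal) * subderiv f x w := by
  have key : subderiv f x w = ((s⁻¹ : ℝ) : EReal) * subderiv f x (s • w) := by
    unfold subderiv
    rw [← SDaux.map_psi_eq hs w]
    rw [show ∀ (u : ℝ × EuclideanSpace ℝ (Fin n) → EReal)
        (m : ℝ × EuclideanSpace ℝ (Fin n) → ℝ × EuclideanSpace ℝ (Fin n))
        (l : Filter (ℝ × EuclideanSpace ℝ (Fin n))),
        Filter.liminf u (Filter.map m l) = Filter.liminf (fun a => u (m a)) l from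
      fun u m l => by unfold Filter.liminf; rw [Filter.map_map]; rfl]
    rw [← SDaux.liminf_coe_mul (inv_pos.mpr hs)]
    apply Filter.liminf_congr
    apply Filter.Eventually.of_forall
    intro p
    show (((s * p.1)⁻¹ : ℝ) : EReal) * (f (x + (s * p.1) • s⁻¹ • p.2) - f x)
      = ((s⁻¹ : ℝ) : EReal) * ((((p.1)⁻¹ : ℝ) : EReal) * (f (x + p.1 • p.2) - f x))
    rw [smul_smul]
    have h1 : s * p.1 * s⁻¹ = p.1 := by field_simp
    rw [h1, mul_inv, EReal.coe_mul, mul_assoc]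
  rw [key, ← mul_assoc, ← EReal.coe_mul, mul_inv_cancel₀ hs.ne', EReal.coe_one, one_mul]

/-- If `f x = ⊤` then the subderivative at `x` is `⊥` in every direction. -/
lemma SDaux.subderiv_eq_bot_of_top {n : ℕ} (f : EuclideanSpace ℝ (Fin n) → EReal)
    (x w : EuclideanSpace ℝ (Fin n)) (h : f x = ⊤) : subderiv f x w = ⊥ := by
  unfold subderiv
  have hev : ∀ᶠ p : ℝ × EuclideanSpace ℝ (Fin n) in (𝓝[>] (0:ℝ)) ×ˢ 𝓝 w,
      (((p.1)⁻¹ : ℝ) : EReal) * (f (x + p.1 • p.2) - f x) = (⊥ : EReal) := by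
    filter_upwards [Filter.Eventually.prod_inl
      (eventually_mem_nhdsWithin : ∀ᶠ t in 𝓝[>] (0:ℝ), t ∈ Ioi (0:ℝ)) (𝓝 w)] with p hp
    rw [h, EReal.sub_top, EReal.coe_mul_bot_of_pos (inv_pos.mpr hp)]
  rw [Filter.liminf_congr hev, Filter.liminf_const]

/-- Final arithmetic step, extracted to keep contexts small. -/
lemma SDaux.final (F dd : ℕ → ℝ) (fstar M : ℝ) (hM : 0 < M)
    (hstep : ∀ k, M * min |dd k| ((dd k) ^ 2) ≤ F k - F (k + 1))
    (hfstar : ∀ k, fstar ≤ F k) (N : ℕ)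
    (hex : ∃ k ≤ N, min |dd k| ((dd k) ^ 2) < 1) :
    ∃ k ≤ N, |dd k| ≤ Real.sqrt ((F 0 - fstar) / (M * (N + 1))) := by
  obtain ⟨k₀, hk₀mem, hk₀min⟩ := Finset.exists_min_image (Finset.range (N + 1))
    (fun k => min |dd k| ((dd k) ^ 2)) ⟨0, Finset.mem_range.mpr (Nat.succ_pos N)⟩
  have hk₀N : k₀ ≤ N := Nat.lt_succ_iff.mp (Finset.mem_range.mp hk₀mem)
  have htel : (N + 1 : ℝ) * (M * min |dd k₀| ((dd k₀) ^ 2)) ≤ F 0 - fstar := by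
    have hsum : ∑ k ∈ Finset.range (N + 1), (M * min |dd k| ((dd k) ^ 2)) ≤
        ∑ k ∈ Finset.range (N + 1), (F k - F (k + 1)) :=
      Finset.sum_le_sum (fun k _ => hstep k)
    rw [Finset.sum_range_sub' F (N + 1)] at hsum
    have hlower : (Finset.range (N + 1)).card • (M * min |dd k₀| ((dd k₀) ^ 2)) ≤
        ∑ k ∈ Finset.range (N + 1), (M * min |dd k| ((dd k) ^ 2)) :=
      Finset.card_nsmul_le_sum _ _ _ (fun k hk =>
        mul_le_mul_of_nonneg_left (hk₀min k hk) hM.le)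
    rw [Finset.card_range, nsmul_eq_mul] at hlower
    push_cast at hlower
    have hfs := hfstar (N + 1)
    linarith
  obtain ⟨j, hjN, hj1⟩ := hex
  have hgj : min |dd k₀| ((dd k₀) ^ 2) ≤ min |dd j| ((dd j) ^ 2) :=
    hk₀min j (Finset.mem_range.mpr (Nat.lt_succ_of_le hjN))
  have hg1 : min |dd k₀| ((dd k₀) ^ 2) < 1 := lt_of_le_of_lt hgj hj1
  have habs_lt : |dd k₀| < 1 := by
    by_contra hc
    push_neg at hc
    have h1 : (1:ℝ) ≤ (dd k₀) ^ 2 := by nlinarith [abs_nonneg (dd k₀), sq_abs (dd k₀)]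
    have := le_min hc h1
    linarith
  have hgeq : min |dd k₀| ((dd k₀) ^ 2) = (dd k₀) ^ 2 := by
    apply min_eq_right
    nlinarith [abs_nonneg (dd k₀), sq_abs (dd k₀)]
  have hdiv : (dd k₀) ^ 2 ≤ (F 0 - fstar) / (M * (N + 1)) := by
    rw [le_div_iff₀ (by positivity : (0:ℝ) < M * (N + 1))]
    rw [hgeq] at htel
    linarith
  refine ⟨k₀, hk₀N, ?_⟩
  have h0 : 0 ≤ (F 0 - fstar) / (M * (N + 1)) := le_trans (sq_nonneg (dd k₀)) hdiv
  rw [Real.le_sqrt (abs_nonneg _), sq_abs]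
  · exact hdiv
  · exact h0

theorem subderivative_method_convergence_rate {n : ℕ}
    (f : EuclideanSpace ℝ (Fin n) → EReal)
    -- `f` takes values in ℝ ∪ {+∞} and is bounded below by `f*`
    (hf_ne_bot : ∀ z, f z ≠ ⊥)
    (fstar : ℝ) (hbdd : ∀ z, (fstar : EReal) ≤ f z)
    (L : ℝ) (hL : 0 < L)
    (hdesc : DescentPropOn f Set.univ L)
    (μ : ℝ) (hμ : μ ∈ Set.Ioo (0:ℝ) 1)
    (x w : ℕ → EuclideanSpace ℝ (Fin n)) (α : ℕ → ℝ) (d : ℕ → ℝ)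
    (hw : ∀ k, ‖w k‖ ≤ 1)
    (hd : ∀ k, subderiv f (x k) (w k) = ((d k : ℝ) : EReal))
    (hdneg : ∀ k, d k < 0)
    (hupd : ∀ k, x (k + 1) = x k + α k • w k)
    -- each `α_k` is produced by Armijo backtracking with reduction multiple `μ`
    (harmijo : ∀ k,
      (α k = 1 ∧ f (x k + α k • w k) - f (x k) < ((α k / 2 * d k : ℝ) : EReal)) ∨
      (α k < 1 ∧ 0 < α k ∧
        f (x k + α k • w k) - f (x k) < ((α k / 2 * d k : ℝ) : EReal) ∧
        ¬ (f (x k + (α k / μ) • w k) - f (x k) < ((α k / (2 * μ) * d k : ℝ) : EReal)))) :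
    ∀ N : ℕ, (∃ k ≤ N, min |d k| ((d k) ^ 2) < 1) →
      ∃ k ≤ N, |d k| ≤
        Real.sqrt (((f (x 0)).toReal - fstar) / (min (1/2) (μ / (2 * L)) * (N + 1))) := by
  obtain ⟨hμ0, hμ1⟩ := hμ
  intro N hexists
  have hMpos : 0 < min (1/2 : ℝ) (μ / (2 * L)) := lt_min (by norm_num) (by positivity)
  -- all iterates have real function values
  have htop : ∀ k, f (x k) ≠ ⊤ := by
    intro k hk
    have h1 := hd k
    rw [SDaux.subderiv_eq_bot_of_top f _ _ hk] at h1
    exact (EReal.coe_ne_bot (d k)) h1.symm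
  have hF : ∀ k, f (x k) = (((f (x k)).toReal : ℝ) : EReal) :=
    fun k => (EReal.coe_toReal (htop k) (hf_ne_bot _)).symm
  have hαpos : ∀ k, 0 < α k := by
    intro k
    rcases harmijo k with ⟨h1, _⟩ | ⟨_, h0, _⟩
    · rw [h1]; norm_num
    · exact h0
  -- per-step sufficient decrease
  have hstep : ∀ k, min (1/2 : ℝ) (μ / (2 * L)) * min |d k| ((d k) ^ 2) ≤
      (f (x k)).toReal - (f (x (k + 1))).toReal := by
    intro k
    have habs : |d k| = -(d k) := abs_of_neg (hdneg k)
    have hmin_nonneg : 0 ≤ min |d k| ((d k) ^ 2) := le_min (abs_nonneg _) (sq_nonneg _)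
    -- Armijo decrease, in real form
    have hdec : (f (x (k + 1))).toReal - (f (x k)).toReal < α k / 2 * d k := by
      have h := (harmijo k).elim (fun h => h.2) (fun h => h.2.2.1)
      rw [← hupd k, hF k, hF (k + 1), ← EReal.coe_sub] at h
      exact_mod_cast h
    -- lower bound on the step size contribution
    have hkey : min (1/2 : ℝ) (μ / (2 * L)) * min |d k| ((d k) ^ 2) ≤ α k / 2 * |d k| := by
      rcases harmijo k with ⟨h1, _⟩ | ⟨hα1, hα0, _, hfail⟩
      · rw [h1]
        calc min (1/2 : ℝ) (μ / (2 * L)) * min |d k| ((d k) ^ 2) ≤ (1/2) * |d k| :=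
              mul_le_mul (min_le_left _ _) (min_le_left _ _) hmin_nonneg (by norm_num)
          _ = 1 / 2 * |d k| := by ring
      · -- backtracking case: derive a lower bound on `α k`
        set s : ℝ := α k / μ with hsdef
        have hspos : 0 < s := div_pos hα0 hμ0
        -- descent property at the rejected step size
        have hdes := hdesc (x k) (mem_univ _) (x k + s • w k) (mem_univ _)
        rw [add_sub_cancel_left, SDaux.subderiv_smul f (x k) (w k) hspos, hd k, hF k] at hdes
        have hnorm : ‖s • w k‖ ^ 2 ≤ s ^ 2 := by
          rw [norm_smul, Real.norm_eq_abs, abs_of_pos hspos]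
          have h1 : (0:ℝ) ≤ ‖w k‖ := norm_nonneg _
          have h2 := hw k
          have h2' : ‖w k‖ ^ 2 ≤ 1 := by nlinarith
          calc (s * ‖w k‖) ^ 2 = s ^ 2 * ‖w k‖ ^ 2 := by ring
            _ ≤ s ^ 2 * 1 := mul_le_mul_of_nonneg_left h2' (sq_nonneg s)
            _ = s ^ 2 := by ring
        set R : ℝ := (f (x k)).toReal + s * d k + L / 2 * ‖s • w k‖ ^ 2 with hRdef
        have hub : f (x k + s • w k) ≤ (R : EReal) := by
          calc f (x k + s • w k) ≤ (((f (x k)).toReal : ℝ) : EReal) + (s : EReal) * ((d k : ℝ) : EReal)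
              + ((L / 2 * ‖s • w k‖ ^ 2 : ℝ) : EReal) := hdes
            _ = (R : EReal) := by
              rw [← EReal.coe_mul, ← EReal.coe_add, ← EReal.coe_add]
        have hne_top : f (x k + s • w k) ≠ ⊤ :=
          ne_top_of_le_ne_top (EReal.coe_ne_top R) hub
        set r : ℝ := (f (x k + s • w k)).toReal with hrdef
        have hr : f (x k + s • w k) = ((r : ℝ) : EReal) :=
          (EReal.coe_toReal hne_top (hf_ne_bot _)).symm
        have hrR : r ≤ R := by rw [hr] at hub; exact_mod_cast hub
        have hlb : α k / (2 * μ) * d k ≤ r - (f (x k)).toReal := by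
          have h := not_lt.mp hfail
          rw [hr, hF k, ← EReal.coe_sub] at h
          exact_mod_cast h
        -- combine to get `μ * |d k| ≤ L * α k`
        have hcomb : s / 2 * d k ≤ s * d k + L / 2 * s ^ 2 := by
          have h5 : r - (f (x k)).toReal ≤ s * d k + L / 2 * s ^ 2 := by
            rw [hRdef] at hrR
            nlinarith [hnorm]
          have h6 : α k / (2 * μ) = s / 2 := by
            rw [hsdef]; ring
          rw [h6] at hlb
          linarith
        have h3 : s * (-(d k)) ≤ s * (L * s) := by nlinarith
        have h4 : -(d k) ≤ L * s := le_of_mul_le_mul_left h3 hspos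
        have hαlb : μ * |d k| ≤ L * α k := by
          rw [habs]
          have h5 := mul_le_mul_of_nonneg_left h4 hμ0.le
          have h6 : μ * (L * s) = L * α k := by
            rw [hsdef]; field_simp
          linarith [h6 ▸ h5]
        -- conclude
        have h1 : min (1/2 : ℝ) (μ / (2 * L)) * min |d k| ((d k) ^ 2) ≤ μ / (2 * L) * (d k) ^ 2 :=
          mul_le_mul (min_le_right _ _) (min_le_right _ _) hmin_nonneg (by positivity)
        refine h1.trans ?_
        rw [div_mul_eq_mul_div, div_le_iff₀ (by positivity : (0:ℝ) < 2 * L)]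
        nlinarith [mul_le_mul_of_nonneg_right hαlb (abs_nonneg (d k)), sq_abs (d k)]
    -- finish the per-step bound
    have : α k / 2 * d k = -(α k / 2 * |d k|) := by rw [habs]; ring
    rw [this] at hdec
    linarith
  have hfstar : ∀ k, fstar ≤ (f (x k)).toReal := by
    intro k
    have := hbdd (x k)
    rw [hF k] at this
    exact_mod_cast this
  exact SDaux.final (fun k => (f (x k)).toReal) d fstar _ hMpos hstep hfstar N hexists
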